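/- The following equality holds in [0,∞]: ∫_{(0,L)} μ(x)⁻¹ (∫_{(0,x)} μ(s) ds) dx = Σ_{n=0}^∞ (ℓ_n/(s_n s_{n+1})) Σ_{k=0}^{n−1} s_k s_{k+1} ℓ_k + (1/2) Σ_{n=0}^∞ ℓ_n². -/

import Mathlib

open MeasureTheory Filter Topology
open scoped ENNReal

/-- key computation in the proof of Theorem 5.5.  In `[0,∞]`:
`∫₀ᴸ (1/μ(x)) ∫₀ˣ μ(s) ds dx
  = Σₙ (ℓₙ/(sₙsₙ₊₁)) Σ_{k<n} sₖsₖ₊₁ℓₖ + (1/2) Σₙ ℓₙ²`. -/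
theorem krein_trace_integral_eval (s : ℕ → ℕ) (hs : ∀ n, 1 ≤ s n)
    (ℓ : ℕ → ℝ) (hℓ : ∀ n, 0 < ℓ n)
    (t : ℕ → ℝ) (ht0 : t 0 = 0) (htrec : ∀ n, t (n + 1) = t n + ℓ n)
    (L : ℝ≥0∞) (hL : L = ∑' n, ENNReal.ofReal (ℓ n))
    (μ : ℝ → ℝ)
    (hμ : ∀ n : ℕ, ∀ x ∈ Set.Ico (t n) (t (n + 1)), μ x = (s n : ℝ) * (s (n + 1) : ℝ))
    (hμout : ∀ x : ℝ, (x < 0 ∨ L ≤ ENNReal.ofReal x) → μ x = 1) :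
    (∫⁻ x in {x : ℝ | 0 < x ∧ ENNReal.ofReal x < L},
        ENNReal.ofReal ((μ x)⁻¹) * ∫⁻ y in Set.Ioo 0 x, ENNReal.ofReal (μ y)) =
      (∑' n : ℕ,
        ENNReal.ofReal (ℓ n / ((s n : ℝ) * (s (n + 1) : ℝ))) *
          ∑ k ∈ Finset.range n, ENNReal.ofReal ((s k : ℝ) * (s (k + 1) : ℝ) * ℓ k)) +
      (1 / 2 : ℝ≥0∞) * ∑' n : ℕ, ENNReal.ofReal (ℓ n ^ 2) := by
  -- abbreviations
  set c : ℕ → ℝ := fun n => (s n : ℝ) * (s (n + 1) : ℝ) with hc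
  have hc1 : ∀ n, (1 : ℝ) ≤ c n := by
    intro n
    have h1 : (1 : ℝ) ≤ (s n : ℝ) := by exact_mod_cast hs n
    have h2 : (1 : ℝ) ≤ (s (n + 1) : ℝ) := by exact_mod_cast hs (n + 1)
    show (1 : ℝ) ≤ (s n : ℝ) * (s (n + 1) : ℝ)
    nlinarith
  have hcpos : ∀ n, (0 : ℝ) < c n := fun n => lt_of_lt_of_le one_pos (hc1 n)
  set A : ℕ → ℝ := fun n => ∑ k ∈ Finset.range n, c k * ℓ k with hA
  have hA0 : ∀ n, 0 ≤ A n := by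
    intro n
    apply Finset.sum_nonneg
    intro k _
    exact mul_nonneg (hcpos k).le (hℓ k).le
  -- basic facts about t
  have hmono : StrictMono t := by
    apply strictMono_nat_of_lt_succ
    intro n; rw [htrec n]; linarith [hℓ n]
  have htnn : ∀ n, 0 ≤ t n := by
    intro n
    cases n with
    | zero => simp [ht0]
    | succ m => exact le_of_lt (ht0 ▸ hmono (Nat.zero_lt_succ m))
  have htpos : ∀ n, 0 < t (n + 1) := fun n => ht0 ▸ hmono (Nat.zero_lt_succ n)
  have htsum : ∀ n, ENNReal.ofReal (t n) = ∑ k ∈ Finset.range n, ENNReal.ofReal (ℓ k) := by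
    intro n
    induction n with
    | zero => simp [ht0]
    | succ m ih =>
      rw [Finset.sum_range_succ, ← ih, htrec m,
        ENNReal.ofReal_add (htnn m) (hℓ m).le]
  -- partial sums are strictly below L
  have htL : ∀ n, ENNReal.ofReal (t n) < L := by
    intro n
    rw [htsum n, hL]
    have h1 : ∑ k ∈ Finset.range n, ENNReal.ofReal (ℓ k) <
        ∑ k ∈ Finset.range (n + 1), ENNReal.ofReal (ℓ k) := by
      rw [Finset.sum_range_succ]
      refine ENNReal.lt_add_right ?_ ?_
      · exact (ENNReal.sum_lt_top.2 fun _ _ => ENNReal.ofReal_lt_top).ne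
      · simpa using ENNReal.ofReal_pos.2 (hℓ n)
    exact lt_of_lt_of_le h1 (ENNReal.sum_le_tsum _)
  -- characterization of the set
  have hex : ∀ x : ℝ, 0 ≤ x → ENNReal.ofReal x < L → ∃ n, t n ≤ x ∧ x < t (n + 1) := by
    intro x hx hxL
    have hexn : ∃ n, x < t n := by
      by_contra h
      push_neg at h
      have hle : L ≤ ENNReal.ofReal x := by
        rw [hL, ENNReal.tsum_eq_iSup_sum]
        apply iSup_le
        intro f
        calc ∑ k ∈ f, ENNReal.ofReal (ℓ k) ≤
            ∑ k ∈ Finset.range (f.sup id + 1), ENNReal.ofReal (ℓ k) := by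
              apply Finset.sum_le_sum_of_subset
              intro k hk
              simp only [Finset.mem_range]
              exact Nat.lt_succ_of_le (Finset.le_sup (f := id) hk)
          _ = ENNReal.ofReal (t (f.sup id + 1)) := (htsum _).symm
          _ ≤ ENNReal.ofReal x := ENNReal.ofReal_le_ofReal (h _)
      exact absurd hxL (not_lt.2 hle)
    obtain ⟨n, hn⟩ := hexn
    clear hxL
    induction n with
    | zero => rw [ht0] at hn; linarith
    | succ m ih =>
      by_cases hxm : x < t m
      · exact ih hxm
      · exact ⟨m, not_lt.1 hxm, hn⟩
  -- the set equals the union of open intervals a.e.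
  set S : Set ℝ := {x : ℝ | 0 < x ∧ ENNReal.ofReal x < L} with hS
  set U : Set ℝ := ⋃ n : ℕ, Set.Ioo (t n) (t (n + 1)) with hU
  have hUS : U ⊆ S := by
    intro x hx
    obtain ⟨n, hn⟩ := Set.mem_iUnion.1 hx
    constructor
    · exact lt_of_le_of_lt (htnn n) hn.1
    · calc ENNReal.ofReal x ≤ ENNReal.ofReal (t (n + 1)) := ENNReal.ofReal_le_ofReal hn.2.le
        _ < L := htL (n + 1)
  have hSU : S \ U ⊆ Set.range t := by
    rintro x ⟨⟨hx0, hxL⟩, hxU⟩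
    obtain ⟨n, hn1, hn2⟩ := hex x hx0.le hxL
    rcases eq_or_lt_of_le hn1 with h | h
    · exact ⟨n, h⟩
    · exact absurd (show x ∈ U from Set.mem_iUnion.2 ⟨n, Set.mem_Ioo.2 ⟨h, hn2⟩⟩) hxU
  have haeq : S =ᵐ[volume] U := by
    rw [MeasureTheory.ae_eq_set]
    constructor
    · exact measure_mono_null hSU ((Set.countable_range t).measure_zero volume)
    · rw [Set.diff_eq_empty.2 hUS]; simp
  -- disjointness
  have hdisj : Pairwise (Function.onFun Disjoint fun n : ℕ => Set.Ioo (t n) (t (n + 1))) := by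
    have key : ∀ m n : ℕ, m < n →
        Disjoint (Set.Ioo (t m) (t (m + 1))) (Set.Ioo (t n) (t (n + 1))) := by
      intro m n hmn
      apply Set.disjoint_left.2
      intro x hx1 hx2
      have h1 : t (m + 1) ≤ t n := hmono.monotone hmn
      linarith [hx1.2, hx2.1]
    intro m n hmn
    rcases lt_or_gt_of_ne hmn with h | h
    · exact key m n h
    · exact (key n m h).symm
  -- inner integral computation
  have hinner : ∀ n : ℕ, ∀ x : ℝ, t n < x → x ≤ t (n + 1) →
      (∫⁻ y in Set.Ioo 0 x, ENNReal.ofReal (μ y)) =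
        ENNReal.ofReal (A n + c n * (x - t n)) := by
    intro n
    induction n with
    | zero =>
      intro x hx1 hx2
      rw [ht0] at hx1
      have hconst : ∀ y ∈ Set.Ioo (0 : ℝ) x, ENNReal.ofReal (μ y) = ENNReal.ofReal (c 0) := by
        intro y hy
        rw [hμ 0 y ⟨ht0 ▸ hy.1.le, lt_of_lt_of_le hy.2 hx2⟩]
      rw [setLIntegral_congr_fun measurableSet_Ioo hconst, setLIntegral_const,
        Real.volume_Ioo, ← ENNReal.ofReal_mul (hcpos 0).le]
      congr 1
      simp [hA, ht0]
    | succ m ih =>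
      intro x hx1 hx2
      have hsplit : Set.Ioo 0 x = Set.Ioo 0 (t (m + 1)) ∪ Set.Ico (t (m + 1)) x :=
        (Set.Ioo_union_Ico_eq_Ioo (htpos m) hx1.le).symm
      have hdisj2 : Disjoint (Set.Ioo (0:ℝ) (t (m+1))) (Set.Ico (t (m+1)) x) := by
        apply Set.disjoint_left.2
        intro y hy1 hy2
        exact absurd hy1.2 (not_lt.2 hy2.1)
      rw [hsplit, lintegral_union measurableSet_Ico hdisj2]
      rw [ih (t (m + 1)) (hmono (Nat.lt_succ_self m)) le_rfl]
      have hconst : ∀ y ∈ Set.Ico (t (m + 1)) x,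
          ENNReal.ofReal (μ y) = ENNReal.ofReal (c (m + 1)) := by
        intro y hy
        rw [hμ (m + 1) y ⟨hy.1, lt_of_lt_of_le hy.2 hx2⟩]
      rw [setLIntegral_congr_fun measurableSet_Ico hconst, setLIntegral_const,
        Real.volume_Ico, ← ENNReal.ofReal_mul (hcpos (m + 1)).le,
        ← ENNReal.ofReal_add
          (add_nonneg (hA0 m) (mul_nonneg (hcpos m).le (by rw [htrec m]; linarith [hℓ m])))
          (mul_nonneg (hcpos (m + 1)).le (by linarith))]
      congr 1
      have hAm : A (m + 1) = A m + c m * ℓ m := Finset.sum_range_succ _ _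
      have htm : t (m + 1) - t m = ℓ m := by rw [htrec m]; ring
      rw [hAm]
      have h2 : t (m + 1) = t m + ℓ m := htrec m
      rw [h2]
      ring
  -- per-interval outer integral
  have houter : ∀ n : ℕ,
      (∫⁻ x in Set.Ioo (t n) (t (n + 1)),
          ENNReal.ofReal ((μ x)⁻¹) * ∫⁻ y in Set.Ioo 0 x, ENNReal.ofReal (μ y)) =
        ENNReal.ofReal (ℓ n / c n * A n + ℓ n ^ 2 / 2) := by
    intro n
    have hcong : ∀ x ∈ Set.Ioo (t n) (t (n + 1)),
        ENNReal.ofReal ((μ x)⁻¹) * (∫⁻ y in Set.Ioo 0 x, ENNReal.ofReal (μ y)) =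
          ENNReal.ofReal ((c n)⁻¹) * ENNReal.ofReal (A n + c n * (x - t n)) := by
      intro x hx
      rw [hμ n x ⟨hx.1.le, hx.2⟩, hinner n x hx.1 hx.2.le]
    rw [setLIntegral_congr_fun measurableSet_Ioo hcong,
      lintegral_const_mul' _ _ ENNReal.ofReal_ne_top]
    have hint : (∫⁻ x in Set.Ioo (t n) (t (n + 1)),
        ENNReal.ofReal (A n + c n * (x - t n))) =
          ENNReal.ofReal (A n * ℓ n + c n * ℓ n ^ 2 / 2) := by
      have hcont : Continuous fun x : ℝ => A n + c n * (x - t n) := by continuity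
      have hInt : IntegrableOn (fun x : ℝ => A n + c n * (x - t n))
          (Set.Ioo (t n) (t (n + 1))) volume :=
        (hcont.integrableOn_Icc).mono_set Set.Ioo_subset_Icc_self
      have hnn : ∀ᵐ x ∂(volume.restrict (Set.Ioo (t n) (t (n + 1)))),
          0 ≤ A n + c n * (x - t n) := by
        rw [ae_restrict_iff' measurableSet_Ioo]
        apply ae_of_all
        intro x hx
        have h1 := hA0 n
        have h2 := hcpos n
        nlinarith [hx.1]
      rw [← ofReal_integral_eq_lintegral_ofReal hInt hnn]
      congr 1
      have h1 : t n ≤ t (n + 1) := (hmono (Nat.lt_succ_self n)).le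
      rw [← integral_Ioc_eq_integral_Ioo, ← intervalIntegral.integral_of_le h1]
      have hsplit2 : (∫ x in (t n)..(t (n + 1)), (A n + c n * (x - t n))) =
          (∫ x in (t n)..(t (n + 1)), A n) +
            c n * ((∫ x in (t n)..(t (n + 1)), x) - ∫ x in (t n)..(t (n + 1)), t n) := by
        rw [← intervalIntegral.integral_sub intervalIntegral.intervalIntegrable_id intervalIntegrable_const,
          ← intervalIntegral.integral_const_mul,
          ← intervalIntegral.integral_add intervalIntegrable_const
            ((IntervalIntegrable.sub intervalIntegral.intervalIntegrable_id
              intervalIntegrable_const).const_mul _)]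
      rw [hsplit2, intervalIntegral.integral_const, integral_id,
        intervalIntegral.integral_const]
      have h2 : t (n + 1) = t n + ℓ n := htrec n
      rw [h2]
      simp only [smul_eq_mul]
      ring
    rw [hint]
    rw [← ENNReal.ofReal_mul (by positivity)]
    congr 1
    have hc0 : c n ≠ 0 := (hcpos n).ne'
    field_simp
  -- assemble
  calc (∫⁻ x in S, ENNReal.ofReal ((μ x)⁻¹) * ∫⁻ y in Set.Ioo 0 x, ENNReal.ofReal (μ y))
      = ∫⁻ x in U, ENNReal.ofReal ((μ x)⁻¹) * ∫⁻ y in Set.Ioo 0 x, ENNReal.ofReal (μ y) :=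
        setLIntegral_congr haeq
    _ = ∑' n : ℕ, ∫⁻ x in Set.Ioo (t n) (t (n + 1)),
          ENNReal.ofReal ((μ x)⁻¹) * ∫⁻ y in Set.Ioo 0 x, ENNReal.ofReal (μ y) :=
        lintegral_iUnion (fun n => measurableSet_Ioo) hdisj _
    _ = ∑' n : ℕ, ENNReal.ofReal (ℓ n / c n * A n + ℓ n ^ 2 / 2) := tsum_congr houter
    _ = (∑' n : ℕ, ENNReal.ofReal (ℓ n / c n) *
          ∑ k ∈ Finset.range n, ENNReal.ofReal (c k * ℓ k)) +
        (1 / 2 : ℝ≥0∞) * ∑' n : ℕ, ENNReal.ofReal (ℓ n ^ 2) := by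
        rw [← ENNReal.tsum_mul_left, ← ENNReal.tsum_add]
        apply tsum_congr
        intro n
        have hd : 0 ≤ ℓ n / c n := div_nonneg (hℓ n).le (hcpos n).le
        rw [ENNReal.ofReal_add (mul_nonneg hd (hA0 n)) (by positivity),
          ENNReal.ofReal_mul hd]
        congr 1
        · congr 1
          rw [hA]
          rw [ENNReal.ofReal_sum_of_nonneg]
          intro k _
          exact mul_nonneg (hcpos k).le (hℓ k).le
        · rw [ENNReal.ofReal_div_of_pos (by norm_num : (0:ℝ) < 2)]
          rw [ENNReal.div_eq_inv_mul]
          norm_num
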